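/- Let N be a nontrivial a-near-ring satisfying the DCCN which is simple and not left distributive (there exist a, b, c : N with a*(b+c) ≠ a*b + a*c). Then either every nonzero element of N is a unit (N is a near-field), or N is isomorphic to M₀(ℤ₃): there exists a bijection φ from N onto the set {f : ZMod 3 → ZMod 3 | f 0 = 0} such that φ(a+b) = φ(a) + φ(b) (pointwise addition) and φ(a*b) = φ(a) ∘ φ(b) for all a, b : N. -/

import Mathlib

/-- Bundled near-ring axioms. -/
structure NRCtx (N : Type*) [AddGroup N] [Mul N] [One N] : Prop where
  assoc : ∀ a b c : N, (a * b) * c = a * (b * c)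
  dist : ∀ a b c : N, (a + b) * c = a * c + b * c
  onel : ∀ a : N, 1 * a = a
  oner : ∀ a : N, a * 1 = a
  zero : ∀ a : N, a * 0 = 0

/-- `A` is closed under left multiplication by arbitrary elements. -/
def Ninv {N : Type*} [AddGroup N] [Mul N] [One N] (A : AddSubgroup N) : Prop :=
  ∀ n : N, ∀ m ∈ A, n * m ∈ A

namespace NRCtx

variable {N : Type*} [AddGroup N] [Mul N] [One N]

lemma zmul (h : NRCtx N) (a : N) : (0 : N) * a = 0 := by
  have h1 : (0:N) * a + 0 = 0 * a + 0 * a := by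
    rw [add_zero, ← h.dist, add_zero]
  exact (add_left_cancel h1).symm

lemma nmul (h : NRCtx N) (a b : N) : (-a) * b = -(a * b) := by
  apply eq_neg_of_add_eq_zero_left
  rw [← h.dist, neg_add_cancel, h.zmul]

lemma smul (h : NRCtx N) (a b c : N) : (a - b) * c = a * c - b * c := by
  rw [sub_eq_add_neg, h.dist, h.nmul, ← sub_eq_add_neg]

end NRCtx
section Chunk2
set_option linter.unusedSectionVars false
variable {N : Type*} [AddGroup N] [Mul N] [One N]

lemma exists_minimal
    (hdcc : ∀ f : ℕ → AddSubgroup N, Antitone f →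
      (∀ i : ℕ, ∀ n : N, ∀ m ∈ f i, n * m ∈ f i) →
      ∃ k : ℕ, ∀ j ≥ k, f j = f k)
    (P : AddSubgroup N → Prop) (hinv : ∀ A, P A → Ninv A) (hne : ∃ A, P A) :
    ∃ A, P A ∧ ∀ B, P B → B ≤ A → B = A := by
  by_contra hcon
  push_neg at hcon
  have step : ∀ A : {A : AddSubgroup N // P A}, ∃ B : {A : AddSubgroup N // P A},
      B.1 ≤ A.1 ∧ B.1 ≠ A.1 := by
    rintro ⟨A, hA⟩
    obtain ⟨B, hB, hle, hne'⟩ := hcon A hA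
    exact ⟨⟨B, hB⟩, hle, hne'⟩
  choose g hg1 hg2 using step
  obtain ⟨A0, hA0⟩ := hne
  set f : ℕ → {A : AddSubgroup N // P A} := fun n => g^[n] ⟨A0, hA0⟩ with hf
  have hsucc : ∀ n, f (n + 1) = g (f n) := fun n => Function.iterate_succ_apply' g n _
  have hanti : Antitone (fun n => (f n).1) := by
    apply antitone_nat_of_succ_le
    intro n
    rw [hsucc]
    exact hg1 (f n)
  obtain ⟨k, hk⟩ := hdcc (fun n => (f n).1) hanti (fun i => hinv _ (f i).2)
  exact hg2 (f k) (by rw [← hsucc]; exact hk (k + 1) (Nat.le_succ k))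

/-- Minimality context for the minimal N-subgroup `M`. -/
structure MinCtx (M : AddSubgroup N) : Prop where
  inv : Ninv M
  nbot : M ≠ ⊥
  min : ∀ S : AddSubgroup N, Ninv S → S ≤ M → S ≠ ⊥ → S = M
  faith : ∀ n : N, (∀ m ∈ M, n * m = 0) → n = 0

/-- Image subgroup `A * c`. -/
def Img (h : NRCtx N) (A : AddSubgroup N) (c : N) : AddSubgroup N where
  carrier := {x | ∃ n ∈ A, n * c = x}
  add_mem' := by
    rintro x y ⟨n, hn, rfl⟩ ⟨n', hn', rfl⟩
    exact ⟨n + n', A.add_mem hn hn', h.dist n n' c⟩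
  zero_mem' := ⟨0, A.zero_mem, h.zmul c⟩
  neg_mem' := by
    rintro x ⟨n, hn, rfl⟩
    exact ⟨-n, A.neg_mem hn, h.nmul n c⟩

lemma mem_Img {h : NRCtx N} {A : AddSubgroup N} {c x : N} :
    x ∈ Img h A c ↔ ∃ n ∈ A, n * c = x := Iff.rfl

lemma Img_inv (h : NRCtx N) {A : AddSubgroup N} (hA : Ninv A) (c : N) :
    Ninv (Img h A c) := by
  rintro n x ⟨n', hn', rfl⟩
  exact ⟨n * n', hA n n' hn', h.assoc n n' c⟩

lemma Img_le (h : NRCtx N) {A M : AddSubgroup N} (hM : Ninv M) {c : N} (hc : c ∈ M) :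
    Img h A c ≤ M := by
  rintro x ⟨n, hn, rfl⟩
  exact hM n c hc

lemma Ninv_top : Ninv (⊤ : AddSubgroup N) := fun _ _ _ => trivial

/-- For `c ∈ M` nonzero, `N * c = M`. -/
lemma surjM (h : NRCtx N) {M : AddSubgroup N} (hM : MinCtx M) {c : N}
    (hc : c ∈ M) (hc0 : c ≠ 0) : ∀ x ∈ M, ∃ n : N, n * c = x := by
  have himg : Img h ⊤ c = M := by
    apply hM.min _ (Img_inv h Ninv_top c) (Img_le h hM.inv hc)
    intro hb
    apply hc0
    have : c ∈ Img h ⊤ c := ⟨1, trivial, h.onel c⟩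
    rw [hb] at this
    exact (AddSubgroup.mem_bot).mp this
  intro x hx
  rw [← himg] at hx
  obtain ⟨n, -, hn⟩ := hx
  exact ⟨n, hn⟩

/-- The equivalence `Ann b ≤ Ann c`. -/
def Erel (b c : N) : Prop := ∀ n : N, n * b = 0 → n * c = 0

lemma Erel.refl (b : N) : Erel b b := fun _ hx => hx

lemma Erel.w (h : NRCtx N) {b c : N} (hE : Erel b c) {n n' : N}
    (hnn : n * b = n' * b) : n * c = n' * c := by
  have h1 : (n - n') * b = 0 := by rw [h.smul, hnn, sub_self]
  have h2 := hE _ h1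
  rw [h.smul] at h2
  exact sub_eq_zero.mp h2

/-- Single annihilator subgroup. -/
def Ann1 (h : NRCtx N) (c : N) : AddSubgroup N where
  carrier := {n | n * c = 0}
  add_mem' := by
    intro x y hx hy
    show (x + y) * c = 0
    rw [h.dist, hx, hy, add_zero]
  zero_mem' := h.zmul c
  neg_mem' := by
    intro x hx
    show (-x) * c = 0
    rw [h.nmul, hx, neg_zero]

lemma Ann1_inv (h : NRCtx N) (c : N) : Ninv (Ann1 h c) := by
  intro n m hm
  show (n * m) * c = 0
  rw [h.assoc, hm, h.zero]

lemma Erel.symm' (h : NRCtx N) {M : AddSubgroup N} (hM : MinCtx M) {b c : N}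
    (hb : b ∈ M) (hc0 : c ≠ 0) (hE : Erel b c) : Erel c b := by
  have hKinv := Img_inv h (Ann1_inv h c) b
  by_cases hbot : Img h (Ann1 h c) b = ⊥
  · intro n hnc
    have : n * b ∈ Img h (Ann1 h c) b := ⟨n, hnc, rfl⟩
    rw [hbot] at this
    exact (AddSubgroup.mem_bot).mp this
  · exfalso
    have hKM : Img h (Ann1 h c) b = M :=
      hM.min _ hKinv (Img_le h hM.inv hb) hbot
    have hbK : b ∈ Img h (Ann1 h c) b := by rw [hKM]; exact hb
    obtain ⟨n0, hn0c, hn0b⟩ := hbK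
    have : n0 * c = 1 * c := hE.w h (by rw [h.onel]; exact hn0b)
    rw [h.onel] at this
    exact hc0 (by rw [← this]; exact hn0c)

end Chunk2
section Sums
set_option linter.unusedSectionVars false
variable {N : Type*} [AddGroup N] [Mul N] [One N]

lemma list_sum_mul (h : NRCtx N) (l : List N) (x : N) :
    l.sum * x = (l.map (· * x)).sum := by
  induction l with
  | nil => simpa using h.zmul x
  | cons a t ih => rw [List.sum_cons, h.dist, ih, List.map_cons, List.sum_cons]

lemma ofFn_sum_mul (h : NRCtx N) {k : ℕ} (w : Fin k → N) (x : N) :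
    (List.ofFn w).sum * x = (List.ofFn fun i => w i * x).sum := by
  rw [list_sum_mul h, List.map_ofFn]
  rfl

lemma sum_eq_zero' {k : ℕ} (w : Fin k → N) (hw : ∀ i, w i = 0) :
    (List.ofFn w).sum = 0 := by
  apply List.sum_eq_zero
  intro x hx
  rw [List.mem_ofFn] at hx
  obtain ⟨i, rfl⟩ := hx
  exact hw i

lemma sum_single {k : ℕ} (w : Fin k → N) (i0 : Fin k) (hw : ∀ i, i ≠ i0 → w i = 0) :
    (List.ofFn w).sum = w i0 := by
  induction k with
  | zero => exact i0.elim0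
  | succ k ih =>
    rw [List.ofFn_succ, List.sum_cons]
    rcases Fin.eq_zero_or_eq_succ i0 with h0 | ⟨j, rfl⟩
    · subst h0
      rw [sum_eq_zero' (fun i => w i.succ) (fun i => hw _ (Fin.succ_ne_zero i)), add_zero]
    · rw [hw 0 (Fin.succ_ne_zero j).symm, zero_add]
      exact ih (fun i => w i.succ) j
        (fun i hij => hw _ (fun hh => hij (Fin.succ_injective _ hh)))

lemma sum_pair {k : ℕ} (w : Fin k → N) (i0 i1 : Fin k) (hlt : i0 < i1)
    (hw : ∀ i, i ≠ i0 → i ≠ i1 → w i = 0) :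
    (List.ofFn w).sum = w i0 + w i1 := by
  induction k with
  | zero => exact i0.elim0
  | succ k ih =>
    rw [List.ofFn_succ, List.sum_cons]
    obtain ⟨j1, rfl⟩ := (Fin.eq_zero_or_eq_succ i1).resolve_left
      (by rintro rfl; exact Fin.not_lt_zero i0 hlt)
    rcases Fin.eq_zero_or_eq_succ i0 with h0 | ⟨j0, rfl⟩
    · subst h0
      rw [sum_single (fun i => w i.succ) j1
        (fun i hij => hw _ (Fin.succ_ne_zero i) (fun hh => hij (Fin.succ_injective _ hh)))]
    · rw [hw 0 (Fin.succ_ne_zero j0).symm (Fin.succ_ne_zero j1).symm, zero_add]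
      exact ih (fun i => w i.succ) j0 j1 (by simpa using hlt)
        (fun i h1 h2 => hw _ (fun hh => h1 (Fin.succ_injective _ hh))
          (fun hh => h2 (Fin.succ_injective _ hh)))

end Sums
section Step
set_option linter.unusedSectionVars false
variable {N : Type*} [AddGroup N] [Mul N] [One N]

/-- Annihilator of all `b j`, `j ≠ i`. -/
def AnnExcept (h : NRCtx N) {r : ℕ} (b : Fin r → N) (i : Fin r) : AddSubgroup N where
  carrier := {n | ∀ j, j ≠ i → n * b j = 0}
  add_mem' := by
    intro x y hx hy j hj
    show (x + y) * b j = 0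
    rw [h.dist, hx j hj, hy j hj, add_zero]
  zero_mem' := fun j _ => h.zmul (b j)
  neg_mem' := by
    intro x hx j hj
    show (-x) * b j = 0
    rw [h.nmul, hx j hj, neg_zero]

lemma mem_AnnExcept {h : NRCtx N} {r : ℕ} {b : Fin r → N} {i : Fin r} {n : N} :
    n ∈ AnnExcept h b i ↔ ∀ j, j ≠ i → n * b j = 0 := Iff.rfl

lemma AnnExcept_inv (h : NRCtx N) {r : ℕ} (b : Fin r → N) (i : Fin r) :
    Ninv (AnnExcept h b i) := by
  intro n m hm
  rw [mem_AnnExcept] at hm ⊢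
  intro j hj
  rw [h.assoc, hm j hj, h.zero]

lemma step (h : NRCtx N) {M : AddSubgroup N} (hM : MinCtx M)
    (hnld : ∃ a b c : N, a * (b + c) ≠ a * b + a * c) :
    ∀ (r : ℕ) (b : Fin r → N), (∀ i, b i ∈ M) → (∀ i, b i ≠ 0) →
      (∀ i j, i ≠ j → ¬ Erel (b i) (b j)) →
      ∀ c : N, c ∈ M → c ≠ 0 → (∀ n : N, (∀ i, n * b i = 0) → n * c = 0) →
      ∃ i, Erel (b i) c := by
  intro r
  induction r with
  | zero =>
    intro b hbM hb0 hpair c hcM hc0 hann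
    exact absurd (by rw [← h.onel c]; exact hann 1 (fun i => i.elim0)) hc0
  | succ r ih =>
    intro b hbM hb0 hpair c hcM hc0 hann
    have hA : ∀ i, ∃ n ∈ AnnExcept h b i, n * b i ≠ 0 := by
      intro i
      by_contra hno
      push_neg at hno
      have hstep := ih (fun j => b (i.succAbove j)) (fun j => hbM _) (fun j => hb0 _)
        (fun j k hjk => hpair _ _ (fun hh => hjk (Fin.succAbove_right_injective hh)))
        (b i) (hbM i) (hb0 i) ?ann
      · obtain ⟨j, hj⟩ := hstep
        exact hpair _ _ (Fin.succAbove_ne i j) hj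
      case ann =>
        intro n hn
        apply hno n
        rw [mem_AnnExcept]
        intro j hj
        obtain ⟨j', rfl⟩ := Fin.exists_succAbove_eq hj
        exact hn j'
    have hT : ∀ i, ∀ x ∈ M, ∃ n ∈ AnnExcept h b i, n * b i = x := by
      intro i x hx
      have himg : Img h (AnnExcept h b i) (b i) = M := by
        apply hM.min _ (Img_inv h (AnnExcept_inv h b i) (b i)) (Img_le h hM.inv (hbM i))
        intro hbot
        obtain ⟨n, hn, hnb⟩ := hA i
        apply hnb
        have hmem : n * b i ∈ Img h (AnnExcept h b i) (b i) := ⟨n, hn, rfl⟩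
        rw [hbot] at hmem
        exact AddSubgroup.mem_bot.mp hmem
      rw [← himg] at hx
      exact hx
    have decomp : ∀ n : N, ∃ w : Fin (r+1) → N,
        (∀ i, w i ∈ AnnExcept h b i) ∧ (∀ i, w i * b i = n * b i) := by
      intro n
      have hex : ∀ i : Fin (r+1), ∃ wi ∈ AnnExcept h b i, wi * b i = n * b i :=
        fun i => hT i _ (hM.inv n _ (hbM i))
      choose w hw1 hw2 using hex
      exact ⟨w, hw1, hw2⟩
    have key : ∀ (n : N) (w : Fin (r+1) → N), (∀ i, w i ∈ AnnExcept h b i) →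
        (∀ i, w i * b i = n * b i) → n * c = (List.ofFn fun i => w i * c).sum := by
      intro n w hw1 hw2
      have hsb : ∀ j, (List.ofFn w).sum * b j = n * b j := by
        intro j
        rw [ofFn_sum_mul h,
          sum_single (fun i => w i * b j) j (fun i hij => (hw1 i) j (Ne.symm hij))]
        exact hw2 j
      have hdiff : (n - (List.ofFn w).sum) * c = 0 := by
        apply hann
        intro j
        rw [h.smul, hsb j, sub_self]
      rw [h.smul] at hdiff
      rw [sub_eq_zero.mp hdiff, ofFn_sum_mul h]
    set Qp : Fin (r+1) → Prop := fun i => ∃ n ∈ AnnExcept h b i, n * c ≠ 0 with hQpdef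
    have ld2 : ∀ i j, i < j → Qp i → Qp j → False := by
      intro i j hij hQi hQj
      have hC : ∀ k, Qp k → ∀ x ∈ M, ∃ p ∈ AnnExcept h b k, p * c = x := by
        intro k hQk x hx
        have himg : Img h (AnnExcept h b k) c = M := by
          apply hM.min _ (Img_inv h (AnnExcept_inv h b k) c) (Img_le h hM.inv hcM)
          intro hbot
          obtain ⟨n, hn, hnc⟩ := hQk
          apply hnc
          have hmem : n * c ∈ Img h (AnnExcept h b k) c := ⟨n, hn, rfl⟩
          rw [hbot] at hmem
          exact AddSubgroup.mem_bot.mp hmem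
        rw [← himg] at hx
        exact hx
      have mld : ∀ (n x y : N), x ∈ M → y ∈ M → n * (x + y) = n * x + n * y := by
        intro n x y hx hy
        obtain ⟨p, hp, hpc⟩ := hC i hQi x hx
        obtain ⟨s, hs, hsc⟩ := hC j hQj y hy
        set w : Fin (r+1) → N := fun l => if l = i then n * p else if l = j then n * s else 0
          with hwdef
        have hwi : w i = n * p := by simp [hwdef]
        have hwj : w j = n * s := by simp [hwdef, (ne_of_lt hij).symm]
        have hwo : ∀ l, l ≠ i → l ≠ j → w l = 0 := by
          intro l h1 h2; simp [hwdef, h1, h2]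
        have hw1 : ∀ l, w l ∈ AnnExcept h b l := by
          intro l
          rw [mem_AnnExcept]
          intro k hkl
          by_cases hli : l = i
          · subst hli
            rw [hwi, h.assoc, hp k hkl, h.zero]
          · by_cases hlj : l = j
            · subst hlj
              rw [hwj, h.assoc, hs k hkl, h.zero]
            · rw [hwo l hli hlj, h.zmul]
        have hw2 : ∀ l, w l * b l = (n * (p + s)) * b l := by
          intro l
          rw [h.assoc, h.dist]
          by_cases hli : l = i
          · rw [hli, hs i (ne_of_lt hij), add_zero, hwi, h.assoc]
          · by_cases hlj : l = j
            · rw [hlj, hp j (ne_of_gt hij), zero_add, hwj, h.assoc]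
            · rw [hp l hli, hs l hlj, add_zero, h.zero, hwo l hli hlj, h.zmul]
        have hkey := key (n * (p + s)) w hw1 hw2
        have hxy : x + y = (p + s) * c := by rw [h.dist, hpc, hsc]
        have hsum : (List.ofFn fun l => w l * c).sum = w i * c + w j * c := by
          apply sum_pair _ i j hij
          intro l h1 h2
          rw [hwo l h1 h2, h.zmul]
        rw [hxy, ← h.assoc, hkey, hsum, hwi, hwj, h.assoc, h.assoc, hpc, hsc]
      obtain ⟨p0, q0, s0, hne⟩ := hnld
      apply hne
      have hd : ∀ m ∈ M, (p0 * (q0 + s0) - (p0 * q0 + p0 * s0)) * m = 0 := by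
        intro m hm
        rw [h.smul, h.dist, h.assoc, h.assoc, h.assoc, h.dist,
          mld p0 (q0 * m) (s0 * m) (hM.inv q0 m hm) (hM.inv s0 m hm), sub_self]
      have := hM.faith _ hd
      rw [sub_eq_zero] at this
      exact this
    by_cases h2 : ∃ i j, i ≠ j ∧ Qp i ∧ Qp j
    · exfalso
      obtain ⟨i, j, hij, hQi, hQj⟩ := h2
      rcases lt_or_gt_of_ne hij with hlt | hgt
      · exact ld2 i j hlt hQi hQj
      · exact ld2 j i hgt hQj hQi
    by_cases h1 : ∃ i, Qp i
    · obtain ⟨i0, hQ0⟩ := h1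
      refine ⟨i0, ?_⟩
      intro n hn
      obtain ⟨w, hw1, hw2⟩ := decomp n
      rw [key n w hw1 hw2]
      apply sum_eq_zero'
      intro l
      by_cases hl : l = i0
      · subst hl
        apply hann
        intro j
        by_cases hj : j = l
        · subst hj
          rw [hw2 j, hn]
        · exact (hw1 l) j hj
      · by_contra hwc
        exact h2 ⟨l, i0, hl, ⟨w l, hw1 l, hwc⟩, hQ0⟩
    · exfalso
      obtain ⟨w, hw1, hw2⟩ := decomp 1
      apply hc0
      have hkey := key 1 w hw1 hw2
      rw [h.onel] at hkey
      rw [hkey]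
      apply sum_eq_zero'
      intro l
      by_contra hwc
      exact h1 ⟨l, w l, hw1 l, hwc⟩

end Step
section Interp
set_option linter.unusedSectionVars false
variable {N : Type*} [AddGroup N] [Mul N] [One N]

lemma interp (h : NRCtx N) {M : AddSubgroup N} (hM : MinCtx M)
    (hnld : ∃ a b c : N, a * (b + c) ≠ a * b + a * c)
    {r : ℕ} (b : Fin (r + 1) → N) (hbM : ∀ i, b i ∈ M) (hb0 : ∀ i, b i ≠ 0)
    (hpair : ∀ i j, i ≠ j → ¬ Erel (b i) (b j))
    (t : Fin (r + 1) → N) (ht : ∀ i, t i ∈ M) :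
    ∃ n : N, ∀ i, n * b i = t i := by
  have hA : ∀ i, ∃ n ∈ AnnExcept h b i, n * b i ≠ 0 := by
    intro i
    by_contra hno
    push_neg at hno
    have hstep := step h hM hnld r (fun j => b (i.succAbove j)) (fun j => hbM _)
      (fun j => hb0 _)
      (fun j k hjk => hpair _ _ (fun hh => hjk (Fin.succAbove_right_injective hh)))
      (b i) (hbM i) (hb0 i) ?ann
    · obtain ⟨j, hj⟩ := hstep
      exact hpair _ _ (Fin.succAbove_ne i j) hj
    case ann =>
      intro n hn
      apply hno n
      rw [mem_AnnExcept]
      intro j hj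
      obtain ⟨j', rfl⟩ := Fin.exists_succAbove_eq hj
      exact hn j'
  have hT : ∀ i, ∀ x ∈ M, ∃ n ∈ AnnExcept h b i, n * b i = x := by
    intro i x hx
    have himg : Img h (AnnExcept h b i) (b i) = M := by
      apply hM.min _ (Img_inv h (AnnExcept_inv h b i) (b i)) (Img_le h hM.inv (hbM i))
      intro hbot
      obtain ⟨n, hn, hnb⟩ := hA i
      apply hnb
      have hmem : n * b i ∈ Img h (AnnExcept h b i) (b i) := ⟨n, hn, rfl⟩
      rw [hbot] at hmem
      exact AddSubgroup.mem_bot.mp hmem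
    rw [← himg] at hx
    exact hx
  have hex : ∀ i : Fin (r+1), ∃ wi ∈ AnnExcept h b i, wi * b i = t i :=
    fun i => hT i _ (ht i)
  choose w hw1 hw2 using hex
  refine ⟨(List.ofFn w).sum, ?_⟩
  intro j
  rw [ofFn_sum_mul h,
    sum_single (fun i => w i * b j) j (fun i hij => (hw1 i) j (Ne.symm hij))]
  exact hw2 j

lemma case_r1 (h : NRCtx N) {M : AddSubgroup N} (hM : MinCtx M)
    {a : N} (haM : a ∈ M) (ha0 : a ≠ 0) (hannA : ∀ n : N, n * a = 0 → n = 0)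
    (horb : ∀ m ∈ M, m ≠ 0 → Erel a m) :
    ∀ x : N, x ≠ 0 → ∃ y, x * y = 1 ∧ y * x = 1 := by
  intro n hn0
  have hcM : n * a ∈ M := hM.inv n a haM
  have hc0 : n * a ≠ 0 := fun hc => hn0 (hannA n hc)
  have hEac : Erel a (n * a) := horb _ hcM hc0
  have hEca : Erel (n * a) a := hEac.symm' h hM haM hc0
  obtain ⟨n1, hn1⟩ := surjM h hM hcM hc0 a haM
  have h1 : (n * n1) * (n * a) = 1 * (n * a) := by
    rw [h.assoc, hn1, h.onel]
  have h2 : (n * n1) * a = 1 * a := hEca.w h h1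
  have hnv : n * n1 = 1 := by
    have := hannA (n * n1 - 1) (by rw [h.smul, h2, sub_self])
    rwa [sub_eq_zero] at this
  have hvn : n1 * n = 1 := by
    have h3 : (n1 * n) * a = 1 * a := by
      rw [h.assoc, hn1, h.onel]
    have := hannA (n1 * n - 1) (by rw [h.smul, h3, sub_self])
    rwa [sub_eq_zero] at this
  exact ⟨n1, hnv, hvn⟩

end Interp
section CaseR2
set_option linter.unusedSectionVars false
set_option linter.unusedVariables false
variable {N : Type*} [AddGroup N] [Mul N] [One N]

lemma case_r2 (h : NRCtx N) {M : AddSubgroup N} (hM : MinCtx M)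
    (hnld : ∃ a b c : N, a * (b + c) ≠ a * b + a * c)
    (hac : ∀ a b : N, (∃ v : N, a * v = 1 ∧ v * a = 1) →
      (∃ v : N, b * v = 1 ∧ v * b = 1) → a ≠ b →
      ∃ v : N, (a - b) * v = 1 ∧ v * (a - b) = 1)
    (r : ℕ) (hr : 2 ≤ r) (b : Fin r → N) (hbM : ∀ i, b i ∈ M) (hb0 : ∀ i, b i ≠ 0)
    (hpair : ∀ i j, i ≠ j → ¬ Erel (b i) (b j))
    (hann0 : ∀ n : N, (∀ i, n * b i = 0) → n = 0) :
    ∃ φ : N → (ZMod 3 → ZMod 3), Function.Injective φ ∧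
      Set.range φ = {f : ZMod 3 → ZMod 3 | f 0 = 0} ∧
      (∀ x y : N, φ (x + y) = φ x + φ y) ∧
      (∀ x y : N, φ (x * y) = φ x ∘ φ y) := by
  classical
  obtain ⟨r', rfl⟩ : ∃ r', r = r' + 1 := ⟨r - 1, by omega⟩
  have hstep' : ∀ m ∈ M, m ≠ 0 → ∃ i, Erel (b i) m := by
    intro m hmM hm0
    exact step h hM hnld (r' + 1) b hbM hb0 hpair m hmM hm0
      (fun n hn => by rw [hann0 n hn, h.zmul])
  have hinterp := interp h hM hnld b hbM hb0 hpair
  -- every nonzero element of M is one of the b i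
  have hsingle : ∀ m ∈ M, m ≠ 0 → ∃ i, m = b i := by
    intro m hmM hm0
    obtain ⟨i, hEi⟩ := hstep' m hmM hm0
    refine ⟨i, ?_⟩
    by_contra hne
    have hEmi : Erel m (b i) := hEi.symm' h hM (hbM i) hm0
    obtain ⟨n1, hn1⟩ := surjM h hM hmM hm0 (b i) (hbM i)
    obtain ⟨u, hu⟩ := hinterp (fun j => if j = i then m else b j)
      (fun j => by by_cases hj : j = i <;> simp [hj, hmM, hbM])
    obtain ⟨v, hv⟩ := hinterp (fun j => if j = i then n1 * b i else b j)
      (fun j => by by_cases hj : j = i <;> simp [hj, hM.inv n1 _ (hbM i), hbM])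
    have hu_i : u * b i = m := by rw [hu i]; simp
    have hu_j : ∀ j, j ≠ i → u * b j = b j := by
      intro j hj; rw [hu j]; simp [hj]
    have hv_i : v * b i = n1 * b i := by rw [hv i]; simp
    have hv_j : ∀ j, j ≠ i → v * b j = b j := by
      intro j hj; rw [hv j]; simp [hj]
    have huv : u * v = 1 := by
      have hj : ∀ j, (u * v - 1) * b j = 0 := by
        intro j
        rw [h.smul, h.onel, h.assoc]
        by_cases hji : j = i
        · rw [hji, hv_i, ← h.assoc]
          have he : (u * n1) * m = 1 * m := by
            rw [h.assoc, hn1, hu_i, h.onel]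
          rw [hEmi.w h he, h.onel, sub_self]
        · rw [hv_j j hji, hu_j j hji, sub_self]
      have := hann0 _ hj
      rwa [sub_eq_zero] at this
    have hvu : v * u = 1 := by
      have hj : ∀ j, (v * u - 1) * b j = 0 := by
        intro j
        rw [h.smul, h.onel, h.assoc]
        by_cases hji : j = i
        · rw [hji, hu_i, hEi.w h hv_i, hn1, sub_self]
        · rw [hu_j j hji, hv_j j hji, sub_self]
      have := hann0 _ hj
      rwa [sub_eq_zero] at this
    have hu1 : u ≠ 1 := by
      intro he
      apply hne
      rw [← hu_i, he, h.onel]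
    obtain ⟨w', hw1', hw2'⟩ := hac u 1 ⟨v, huv, hvu⟩
      ⟨1, by rw [h.onel], by rw [h.onel]⟩ hu1
    obtain ⟨j, hji⟩ : ∃ j : Fin (r' + 1), j ≠ i := by
      refine ⟨⟨if i.val = 0 then 1 else 0, by split <;> omega⟩, ?_⟩
      intro hh
      apply_fun Fin.val at hh
      simp only at hh
      split at hh <;> omega
    apply hb0 j
    have h0 : (u - 1) * b j = 0 := by
      rw [h.smul, hu_j j hji, h.onel, sub_self]
    calc b j = 1 * b j := (h.onel _).symm
      _ = (w' * (u - 1)) * b j := by rw [hw2']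
      _ = w' * ((u - 1) * b j) := h.assoc _ _ _
      _ = 0 := by rw [h0, h.zero]
  have hbne : ∀ i j : Fin (r' + 1), i ≠ j → b i ≠ b j := by
    intro i j hij he
    exact hpair i j hij (by rw [he]; exact Erel.refl _)
  -- rule out r ≥ 3
  have hr2 : r' = 1 := by
    by_contra hne1
    have hlt0 : 0 < r' + 1 := by omega
    have hlt1 : 1 < r' + 1 := by omega
    have hlt2 : 2 < r' + 1 := by omega
    set i0 : Fin (r' + 1) := ⟨0, hlt0⟩ with hi0
    set i1 : Fin (r' + 1) := ⟨1, hlt1⟩ with hi1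
    set i2 : Fin (r' + 1) := ⟨2, hlt2⟩ with hi2
    have h01 : i0 ≠ i1 := by simp [hi0, hi1, Fin.ext_iff]
    have h02 : i0 ≠ i2 := by simp [hi0, hi2, Fin.ext_iff]
    have h12 : i1 ≠ i2 := by simp [hi1, hi2, Fin.ext_iff]
    obtain ⟨u, hu⟩ := hinterp (fun j => if j = i0 then b i1 else if j = i1 then b i0 else b j)
      (fun j => by
        by_cases hj0 : j = i0
        · simp [hj0, hbM]
        · by_cases hj1 : j = i1
          · simp [hj0, hj1, Ne.symm h01, hbM]
          · simp [hj0, hj1, hbM])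
    have hu0 : u * b i0 = b i1 := by rw [hu i0]; simp
    have hu1 : u * b i1 = b i0 := by rw [hu i1]; simp [Ne.symm h01]
    have huj : ∀ j, j ≠ i0 → j ≠ i1 → u * b j = b j := by
      intro j hj0 hj1; rw [hu j]; simp [hj0, hj1]
    have huu : u * u = 1 := by
      have hj : ∀ j, (u * u - 1) * b j = 0 := by
        intro j
        rw [h.smul, h.onel, h.assoc]
        by_cases hj0 : j = i0
        · rw [hj0, hu0, hu1, sub_self]
        · by_cases hj1 : j = i1
          · rw [hj1, hu1, hu0, sub_self]
          · rw [huj j hj0 hj1, huj j hj0 hj1, sub_self]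
      have := hann0 _ hj
      rwa [sub_eq_zero] at this
    have hu_ne : u ≠ 1 := by
      intro he
      apply hbne i0 i1 h01
      rw [← hu0, he, h.onel]
    obtain ⟨w', hw1', hw2'⟩ := hac u 1 ⟨u, huu, huu⟩
      ⟨1, by rw [h.onel], by rw [h.onel]⟩ hu_ne
    apply hb0 i2
    have h0 : (u - 1) * b i2 = 0 := by
      rw [h.smul, huj i2 (Ne.symm h02) (Ne.symm h12), h.onel, sub_self]
    calc b i2 = 1 * b i2 := (h.onel _).symm
      _ = (w' * (u - 1)) * b i2 := by rw [hw2']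
      _ = w' * ((u - 1) * b i2) := h.assoc _ _ _
      _ = 0 := by rw [h0, h.zero]
  subst hr2
  -- now b : Fin 2 → N
  have hfin2 : ∀ i : Fin 2, i = 0 ∨ i = 1 := by decide
  have h01' : (0 : Fin 2) ≠ 1 := by decide
  have hbne01 : b 0 ≠ b 1 := hbne 0 1 h01'
  have hmem3 : ∀ m ∈ M, m = 0 ∨ m = b 0 ∨ m = b 1 := by
    intro m hm
    by_cases hm0 : m = 0
    · exact Or.inl hm0
    · obtain ⟨i, hi⟩ := hsingle m hm hm0
      rcases hfin2 i with rfl | rfl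
      · exact Or.inr (Or.inl hi)
      · exact Or.inr (Or.inr hi)
  -- addition table
  have hS_ac : b 0 + b 1 = 0 := by
    rcases hmem3 (b 0 + b 1) (M.add_mem (hbM 0) (hbM 1)) with h1 | h1 | h1
    · exact h1
    · exact absurd (add_left_cancel (show b 0 + b 1 = b 0 + 0 by rw [add_zero]; exact h1))
        (hb0 1)
    · exact absurd (add_right_cancel (show b 0 + b 1 = 0 + b 1 by rw [zero_add]; exact h1))
        (hb0 0)
  have hS_ca : b 1 + b 0 = 0 := by
    rcases hmem3 (b 1 + b 0) (M.add_mem (hbM 1) (hbM 0)) with h1 | h1 | h1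
    · exact h1
    · exact absurd (add_right_cancel (show b 1 + b 0 = 0 + b 0 by rw [zero_add]; exact h1))
        (hb0 1)
    · exact absurd (add_left_cancel (show b 1 + b 0 = b 1 + 0 by rw [add_zero]; exact h1))
        (hb0 0)
  have hS_aa : b 0 + b 0 = b 1 := by
    rcases hmem3 (b 0 + b 0) (M.add_mem (hbM 0) (hbM 0)) with h1 | h1 | h1
    · exact absurd (add_left_cancel (hS_ac.trans h1.symm)).symm hbne01
    · exact absurd (add_left_cancel (show b 0 + b 0 = b 0 + 0 by rw [add_zero]; exact h1))
        (hb0 0)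
    · exact h1
  have hS_cc : b 1 + b 1 = b 0 := by
    rcases hmem3 (b 1 + b 1) (M.add_mem (hbM 1) (hbM 1)) with h1 | h1 | h1
    · exact absurd (add_left_cancel (hS_ca.trans h1.symm)) hbne01
    · exact h1
    · exact absurd (add_left_cancel (show b 1 + b 1 = b 1 + 0 by rw [add_zero]; exact h1))
        (hb0 1)
  -- the encoding maps
  set eM : N → ZMod 3 := fun x => if x = b 0 then 1 else if x = b 1 then 2 else 0 with heM
  set eN : ZMod 3 → N := fun z => if z = 1 then b 0 else if z = 2 then b 1 else 0 with heN
  have heMa : eM (b 0) = 1 := by simp [heM]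
  have heMc : eM (b 1) = 2 := by simp [heM, Ne.symm hbne01]
  have heM0 : eM 0 = 0 := by simp [heM, Ne.symm (hb0 0), Ne.symm (hb0 1)]
  have heN0 : eN 0 = 0 := by simp [heN, (by decide : ¬((0:ZMod 3) = 1)), (by decide : ¬((0:ZMod 3) = 2))]
  have heN1 : eN 1 = b 0 := by simp [heN]
  have heN2 : eN 2 = b 1 := by simp [heN, (by decide : ¬((2:ZMod 3) = 1))]
  have hz3 : ∀ z : ZMod 3, z = 0 ∨ z = 1 ∨ z = 2 := by decide
  have heN_mem : ∀ z, eN z ∈ M := by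
    intro z
    rcases hz3 z with rfl | rfl | rfl
    · rw [heN0]; exact M.zero_mem
    · rw [heN1]; exact hbM 0
    · rw [heN2]; exact hbM 1
  have heMN : ∀ z, eM (eN z) = z := by
    intro z
    rcases hz3 z with rfl | rfl | rfl
    · rw [heN0, heM0]
    · rw [heN1, heMa]
    · rw [heN2, heMc]
  have heNM : ∀ m ∈ M, eN (eM m) = m := by
    intro m hm
    rcases hmem3 m hm with rfl | rfl | rfl
    · rw [heM0, heN0]
    · rw [heMa, heN1]
    · rw [heMc, heN2]
  have heM_add : ∀ x, x ∈ M → ∀ y, y ∈ M → eM (x + y) = eM x + eM y := by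
    intro x hx y hy
    rcases hmem3 x hx with rfl | rfl | rfl <;> rcases hmem3 y hy with rfl | rfl | rfl
    · rw [add_zero, heM0]; decide
    · rw [zero_add, heM0, heMa]; decide
    · rw [zero_add, heM0, heMc]; decide
    · rw [add_zero, heM0, heMa]; decide
    · rw [hS_aa, heMc, heMa]; decide
    · rw [hS_ac, heM0, heMa, heMc]; decide
    · rw [add_zero, heM0, heMc]; decide
    · rw [hS_ca, heM0, heMc, heMa]; decide
    · rw [hS_cc, heMa, heMc]; decide
  set φ : N → ZMod 3 → ZMod 3 := fun n z => eM (n * eN z) with hφ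
  have hφapp : ∀ n z, φ n z = eM (n * eN z) := fun _ _ => rfl
  refine ⟨φ, ?_, ?_, ?_, ?_⟩
  · -- injective
    intro n n' he
    have hval : ∀ z, n * eN z = n' * eN z := by
      intro z
      have h1 : eM (n * eN z) = eM (n' * eN z) := by
        rw [← hφapp, ← hφapp, he]
      have h2 := congrArg eN h1
      rwa [heNM _ (hM.inv n _ (heN_mem z)), heNM _ (hM.inv n' _ (heN_mem z))] at h2
    have hz : ∀ i : Fin 2, (n - n') * b i = 0 := by
      intro i
      rcases hfin2 i with rfl | rfl
      · rw [h.smul, ← heN1, hval 1, sub_self]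
      · rw [h.smul, ← heN2, hval 2, sub_self]
    have := hann0 _ hz
    rwa [sub_eq_zero] at this
  · -- range
    ext f
    simp only [Set.mem_range, Set.mem_setOf_eq]
    constructor
    · rintro ⟨n, rfl⟩
      rw [hφapp, heN0, h.zero, heM0]
    · intro hf
      obtain ⟨n, hn⟩ := hinterp (fun j => if j = 0 then eN (f 1) else eN (f 2))
        (fun j => by by_cases hj : j = 0 <;> simp [hj, heN_mem])
      refine ⟨n, ?_⟩
      funext z
      rw [hφapp]
      rcases hz3 z with rfl | rfl | rfl
      · rw [heN0, h.zero, heM0]; exact hf.symm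
      · have h1 := hn 0
        rw [if_pos rfl] at h1
        rw [heN1, h1, heMN]
      · have h1 := hn 1
        rw [if_neg (by decide : ¬((1 : Fin 2) = 0))] at h1
        rw [heN2, h1, heMN]
  · -- additive
    intro x y
    funext z
    rw [Pi.add_apply, hφapp, hφapp, hφapp, h.dist]
    exact heM_add _ (hM.inv x _ (heN_mem z)) _ (hM.inv y _ (heN_mem z))
  · -- multiplicative
    intro x y
    funext z
    rw [Function.comp_apply, hφapp, hφapp, hφapp, h.assoc,
      heNM _ (hM.inv y _ (heN_mem z))]

end CaseR2
section Main
set_option linter.unusedSectionVars false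
set_option linter.unusedVariables false
variable {N : Type*} [AddGroup N] [Mul N] [One N]

/-- Annihilator of a list. -/
def annL (h : NRCtx N) (l : List N) : AddSubgroup N where
  carrier := {n | ∀ x ∈ l, n * x = 0}
  add_mem' := by
    intro x y hx hy z hz
    show (x + y) * z = 0
    rw [h.dist, hx z hz, hy z hz, add_zero]
  zero_mem' := fun z _ => h.zmul z
  neg_mem' := by
    intro x hx z hz
    show (-x) * z = 0
    rw [h.nmul, hx z hz, neg_zero]

lemma mem_annL {h : NRCtx N} {l : List N} {n : N} :
    n ∈ annL h l ↔ ∀ x ∈ l, n * x = 0 := Iff.rfl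

lemma annL_inv (h : NRCtx N) (l : List N) : Ninv (annL h l) := by
  intro n m hm
  rw [mem_annL] at hm ⊢
  intro x hx
  rw [h.assoc, hm x hx, h.zero]

lemma faithful (h : NRCtx N) {M : AddSubgroup N} (hMinv : Ninv M) (hMne : M ≠ ⊥)
    (hsimple : ∀ I : AddSubgroup N,
      (∀ n : N, ∀ i ∈ I, n + i - n ∈ I) →
      (∀ i ∈ I, ∀ n : N, i * n ∈ I) →
      (∀ n m : N, ∀ i ∈ I, n * (m + i) - n * m ∈ I) →
      I = ⊥ ∨ I = ⊤) :
    ∀ n : N, (∀ m ∈ M, n * m = 0) → n = 0 := by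
  set A : AddSubgroup N :=
    { carrier := {n | ∀ m ∈ M, n * m = 0}
      add_mem' := by
        intro x y hx hy m hm
        show (x + y) * m = 0
        rw [h.dist, hx m hm, hy m hm, add_zero]
      zero_mem' := fun m _ => h.zmul m
      neg_mem' := by
        intro x hx m hm
        show (-x) * m = 0
        rw [h.nmul, hx m hm, neg_zero] } with hA
  have hmemA : ∀ n : N, n ∈ A ↔ ∀ m ∈ M, n * m = 0 := fun n => Iff.rfl
  have hnorm : ∀ n : N, ∀ i ∈ A, n + i - n ∈ A := by
    intro n i hi
    rw [hmemA] at hi ⊢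
    intro m hm
    rw [h.smul, h.dist, hi m hm, add_zero, sub_self]
  have hright : ∀ i ∈ A, ∀ n : N, i * n ∈ A := by
    intro i hi n
    rw [hmemA] at hi ⊢
    intro m hm
    rw [h.assoc]
    exact hi _ (hMinv n m hm)
  have hlft : ∀ n m : N, ∀ i ∈ A, n * (m + i) - n * m ∈ A := by
    intro n m i hi
    rw [hmemA] at hi ⊢
    intro x hx
    rw [h.smul, h.assoc, h.assoc, h.dist, hi x hx, add_zero, sub_self]
  rcases hsimple A hnorm hright hlft with hbot | htop
  · intro n hn
    have hmem : n ∈ A := (hmemA n).mpr hn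
    rw [hbot] at hmem
    exact AddSubgroup.mem_bot.mp hmem
  · exfalso
    apply hMne
    have h1 : (1 : N) ∈ A := htop ▸ AddSubgroup.mem_top 1
    rw [AddSubgroup.eq_bot_iff_forall]
    intro m hm
    have := (hmemA 1).mp h1 m hm
    rwa [h.onel] at this

lemma prune (h : NRCtx N) {M : AddSubgroup N} (hM : MinCtx M) :
    ∀ l : List N, (∀ x ∈ l, x ∈ M) →
    ∃ l' : List N, (∀ x ∈ l', x ∈ M ∧ x ≠ 0) ∧ l'.Pairwise (fun x y => ¬ Erel x y) ∧
      (∀ n : N, (∀ x ∈ l', n * x = 0) → ∀ x ∈ l, n * x = 0) := by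
  classical
  intro l
  induction l with
  | nil => exact fun _ => ⟨[], by simp, List.Pairwise.nil, by simp⟩
  | cons a t ih =>
    intro hmem
    obtain ⟨l', hl'1, hl'2, hl'3⟩ := ih (fun x hx => hmem x (List.mem_cons_of_mem a hx))
    by_cases ha0 : a = 0
    · refine ⟨l', hl'1, hl'2, ?_⟩
      intro n hn x hx
      rcases List.mem_cons.mp hx with rfl | hx
      · rw [ha0, h.zero]
      · exact hl'3 n hn x hx
    · by_cases haE : ∃ x ∈ l', Erel x a
      · obtain ⟨y, hy, hya⟩ := haE
        refine ⟨l', hl'1, hl'2, ?_⟩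
        intro n hn x hx
        rcases List.mem_cons.mp hx with rfl | hx
        · exact hya n (hn y hy)
        · exact hl'3 n hn x hx
      · push_neg at haE
        refine ⟨a :: l', ?_, ?_, ?_⟩
        · intro x hx
          rcases List.mem_cons.mp hx with rfl | hx
          · exact ⟨hmem x List.mem_cons_self, ha0⟩
          · exact hl'1 x hx
        · refine List.Pairwise.cons ?_ hl'2
          intro y hy hEay
          exact haE y hy (hEay.symm' h hM (hmem a List.mem_cons_self) ((hl'1 y hy).2))
        · intro n hn x hx
          rcases List.mem_cons.mp hx with rfl | hx
          · exact hn x List.mem_cons_self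
          · exact hl'3 n (fun y hy => hn y (List.mem_cons_of_mem a hy)) x hx

end Main

/-- A simple a-near-ring with DCCN which is not left distributive
is a near-field or isomorphic to `M₀(ℤ₃)`, the near-ring of zero-preserving
self-maps of `ℤ₃` under pointwise addition and composition. -/
theorem stmt14 {N : Type*} [AddGroup N] [Mul N] [One N]
    (hassoc : ∀ a b c : N, (a * b) * c = a * (b * c))
    (hdist : ∀ a b c : N, (a + b) * c = a * c + b * c)
    (honel : ∀ a : N, 1 * a = a) (honer : ∀ a : N, a * 1 = a)
    (hzero : ∀ a : N, a * 0 = 0)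
    (ha : ∀ a b : N, (∃ v : N, a * v = 1 ∧ v * a = 1) →
      (∃ v : N, b * v = 1 ∧ v * b = 1) → a ≠ b →
      ∃ v : N, (a - b) * v = 1 ∧ v * (a - b) = 1)
    (hnt : (0 : N) ≠ 1)
    (hdcc : ∀ f : ℕ → AddSubgroup N, Antitone f →
      (∀ i : ℕ, ∀ n : N, ∀ m ∈ f i, n * m ∈ f i) →
      ∃ k : ℕ, ∀ j ≥ k, f j = f k)
    (hsimple : ∀ I : AddSubgroup N,
      (∀ n : N, ∀ i ∈ I, n + i - n ∈ I) →
      (∀ i ∈ I, ∀ n : N, i * n ∈ I) →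
      (∀ n m : N, ∀ i ∈ I, n * (m + i) - n * m ∈ I) →
      I = ⊥ ∨ I = ⊤)
    (hnld : ∃ a b c : N, a * (b + c) ≠ a * b + a * c) :
    (∀ x : N, x ≠ 0 → ∃ y : N, x * y = 1 ∧ y * x = 1) ∨
    (∃ φ : N → (ZMod 3 → ZMod 3),
      Function.Injective φ ∧
      Set.range φ = {f : ZMod 3 → ZMod 3 | f 0 = 0} ∧
      (∀ a b : N, φ (a + b) = φ a + φ b) ∧
      (∀ a b : N, φ (a * b) = φ a ∘ φ b)) := by
  classical
  have h : NRCtx N := ⟨hassoc, hdist, honel, honer, hzero⟩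
  obtain ⟨M, ⟨hMinv, hMne⟩, hMmin⟩ := exists_minimal hdcc
    (fun A => Ninv A ∧ A ≠ ⊥) (fun A hA => hA.1)
    ⟨⊤, Ninv_top, fun htop => hnt (by
      have h1 : (1 : N) ∈ (⊤ : AddSubgroup N) := trivial
      rw [htop] at h1
      exact (AddSubgroup.mem_bot.mp h1).symm)⟩
  have hfaith : ∀ n : N, (∀ m ∈ M, n * m = 0) → n = 0 := faithful h hMinv hMne hsimple
  have hM : MinCtx M := ⟨hMinv, hMne, fun S hS hSM hSne => hMmin S ⟨hS, hSne⟩ hSM, hfaith⟩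
  obtain ⟨A0, ⟨l0, hl0M, rfl⟩, hA0min⟩ := exists_minimal hdcc
    (fun A => ∃ l : List N, (∀ x ∈ l, x ∈ M) ∧ A = annL h l)
    (by rintro A ⟨l, hl, rfl⟩; exact annL_inv h l)
    ⟨annL h [], [], by simp, rfl⟩
  have hl0 : ∀ n : N, (∀ x ∈ l0, n * x = 0) → n = 0 := by
    intro n hn
    apply hfaith
    intro m hm
    have hle : annL h (m :: l0) ≤ annL h l0 := by
      intro x hx
      rw [mem_annL] at hx ⊢
      intro y hy
      exact hx y (List.mem_cons_of_mem m hy)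
    have heq : annL h (m :: l0) = annL h l0 := by
      apply hA0min _ _ hle
      refine ⟨m :: l0, ?_, rfl⟩
      intro x hx
      rcases List.mem_cons.mp hx with rfl | hx
      · exact hm
      · exact hl0M x hx
    have hnmem : n ∈ annL h (m :: l0) := by
      rw [heq, mem_annL]
      exact hn
    exact hnmem m List.mem_cons_self
  obtain ⟨l1, hl1mem, hl1pair, hl1ann⟩ := prune h hM l0 hl0M
  have hl1 : ∀ n : N, (∀ x ∈ l1, n * x = 0) → n = 0 :=
    fun n hn => hl0 n (hl1ann n hn)
  set r := l1.length with hrdef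
  set b : Fin r → N := fun i => l1.get i with hbdef
  have hbM : ∀ i, b i ∈ M := fun i => (hl1mem _ (List.mem_iff_get.mpr ⟨i, rfl⟩)).1
  have hb0 : ∀ i, b i ≠ 0 := fun i => (hl1mem _ (List.mem_iff_get.mpr ⟨i, rfl⟩)).2
  have hpair : ∀ i j : Fin r, i ≠ j → ¬ Erel (b i) (b j) := by
    intro i j hij
    have hp := List.pairwise_iff_get.mp hl1pair
    rcases lt_or_gt_of_ne hij with hlt | hgt
    · exact hp i j hlt
    · intro hE
      exact hp j i hgt (hE.symm' h hM (hbM i) (hb0 j))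
  have hann0 : ∀ n : N, (∀ i, n * b i = 0) → n = 0 := by
    intro n hn
    apply hl1
    intro x hx
    obtain ⟨i, hi⟩ := List.mem_iff_get.mp hx
    rw [← hi]
    exact hn i
  have hr0 : r ≠ 0 := by
    intro h0
    have hempty : l1 = [] := List.length_eq_zero_iff.mp h0
    have h10 : (1 : N) = 0 := by
      apply hl1
      intro x hx
      rw [hempty] at hx
      exact absurd hx List.not_mem_nil
    exact hnt h10.symm
  by_cases hr1 : r = 1
  · left
    have hidx : ∀ i : Fin r, i = ⟨0, by omega⟩ := by
      intro i
      apply Fin.ext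
      have := i.isLt
      omega
    apply case_r1 h hM (hbM ⟨0, by omega⟩) (hb0 ⟨0, by omega⟩)
    · intro n hn
      apply hann0
      intro i
      rw [hidx i]
      exact hn
    · intro m hmM hm0
      obtain ⟨i, hi⟩ := step h hM hnld r b hbM hb0 hpair m hmM hm0
        (fun n hn => by rw [hann0 n hn, h.zmul])
      rwa [hidx i] at hi
  · right
    have hr2 : 2 ≤ r := by omega
    exact case_r2 h hM hnld ha r hr2 b hbM hb0 hpair hann0
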